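/- Let g be a Lie algebra over a field K of characteristic zero, M a module over the universal enveloping algebra U(g), x ∈ g, and v ∈ M with x·v = 0. Let y ∈ g with [x,[x,y]] = 0. Then for all n ≥ 0, xⁿ·yⁿ·v = n! · [x,y]ⁿ·v in M. -/

import Mathlib

/-- Let `g` be a Lie algebra over a field `K` of characteristic zero, `M` a `U(g)`-module
(equivalently, a Lie module over `g`), `x ∈ g` and `v ∈ M` with `x·v = 0`, and `y ∈ g` with
`[x,[x,y]] = 0`. Then `xⁿ·yⁿ·v = n! · [x,y]ⁿ·v` for all `n ≥ 0`. -/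
theorem statement2 {K : Type*} [Field K] [CharZero K]
    {L : Type*} [LieRing L] [LieAlgebra K L]
    {M : Type*} [AddCommGroup M] [Module K M] [LieRingModule L M] [LieModule K L M]
    (x y : L) (v : M) (hxv : ⁅x, v⁆ = 0) (hxy : ⁅x, ⁅x, y⁆⁆ = 0) (n : ℕ) :
    ((LieModule.toEnd K L M x) ^ n) (((LieModule.toEnd K L M y) ^ n) v) =
      (Nat.factorial n) • ((LieModule.toEnd K L M ⁅x, y⁆ ^ n) v) := by
  set X := LieModule.toEnd K L M x with hX
  set Y := LieModule.toEnd K L M y with hY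
  set Z := LieModule.toEnd K L M ⁅x, y⁆ with hZ
  have hXv : X v = 0 := hxv
  have hcomm : X * Y = Y * X + Z := by
    letI := LieRing.ofAssociativeRing (A := Module.End K M)
    have h := (LieModule.toEnd K L M).map_lie x y
    rw [Ring.lie_def, ← hX, ← hY, ← hZ] at h
    rw [h]; noncomm_ring
  have hXZ : X * Z = Z * X := by
    letI := LieRing.ofAssociativeRing (A := Module.End K M)
    have h := (LieModule.toEnd K L M).map_lie x ⁅x, y⁆
    rw [Ring.lie_def, hxy, map_zero, ← hX, ← hZ] at h
    exact sub_eq_zero.mp h.symm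
  -- commutation: X^(m+1) * Y = Y * X^(m+1) + (m+1) • (Z * X^m)
  have hpow : ∀ m : ℕ, X ^ (m + 1) * Y = Y * X ^ (m + 1) + (m + 1) • (Z * X ^ m) := by
    intro m
    induction m with
    | zero => simpa using hcomm
    | succ m ih =>
      calc X ^ (m + 2) * Y = X * (X ^ (m + 1) * Y) := by
            rw [pow_succ' X (m + 1), mul_assoc]
        _ = X * (Y * X ^ (m + 1)) + (m + 1) • (X * (Z * X ^ m)) := by
            rw [ih, mul_add, mul_smul_comm]
        _ = (X * Y) * X ^ (m + 1) + (m + 1) • ((X * Z) * X ^ m) := by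
            rw [mul_assoc, mul_assoc]
        _ = (Y * X + Z) * X ^ (m + 1) + (m + 1) • ((Z * X) * X ^ m) := by
            rw [hcomm, hXZ]
        _ = Y * X ^ (m + 2) + (Z * X ^ (m + 1) + (m + 1) • (Z * X ^ (m + 1))) := by
            rw [add_mul, mul_assoc, mul_assoc, ← pow_succ', ← pow_succ', add_assoc]
        _ = Y * X ^ (m + 2) + (m + 2) • (Z * X ^ (m + 1)) := by
            rw [succ_nsmul (Z * X ^ (m + 1)) (m + 1)]
            abel
  have hXk : ∀ k : ℕ, (X ^ (k + 1)) v = 0 := by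
    intro k
    rw [pow_succ, Module.End.mul_apply, hXv, map_zero]
  have key : ∀ n m : ℕ, n ≤ m → (X ^ m) ((Y ^ n) v) =
      (m.descFactorial n) • ((Z ^ n) ((X ^ (m - n)) v)) := by
    intro n
    induction n with
    | zero => intro m _; simp
    | succ n ih =>
      intro m hm
      obtain ⟨m', rfl⟩ : ∃ m', m = m' + 1 := ⟨m - 1, by omega⟩
      have hm' : n ≤ m' := by omega
      have h1 : (X ^ (m' + 1)) ((Y ^ (n + 1)) v) =
          Y ((X ^ (m' + 1)) ((Y ^ n) v)) + (m' + 1) • (Z ((X ^ m') ((Y ^ n) v))) := by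
        have happ := congrArg (fun f : Module.End K M => f ((Y ^ n) v)) (hpow m')
        simp only [Module.End.mul_apply, LinearMap.add_apply, LinearMap.smul_apply] at happ
        rw [← Module.End.mul_apply Y (Y ^ n), ← pow_succ'] at happ
        exact happ
      rw [h1, ih (m' + 1) (by omega), ih m' hm']
      have h2 : m' + 1 - n = (m' - n) + 1 := by omega
      rw [h2, hXk (m' - n), map_zero, smul_zero, map_zero, zero_add]
      have h3 : m' + 1 - (n + 1) = m' - n := by omega
      rw [h3, map_nsmul, ← mul_smul, Nat.succ_descFactorial_succ]
      congr 1
      rw [pow_succ' Z n, Module.End.mul_apply]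
  have := key n n le_rfl
  simpa [Nat.descFactorial_self] using this
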